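/- Let (V, K, q) be an anisotropic quadratic space with basepoint ε, let D be a division ring, and let γ : V → D be an additive bijection with γ(ε) = 1 such that γ(h_a(x)) = γ(a)*γ(x)*γ(a) for all a ∈ V with a ≠ 0 and all x ∈ V. Define φ : K → D by φ(s) := γ(s • ε). Then every x ∈ V satisfies γ(x)² − γ(x)*φ(T(x)) + φ(q(x)) = 0, where T(x) = f(ε, x); in particular, every element of D satisfies a monic quadratic equation with coefficients in the subfield φ(K), i.e., D is quadratic over φ(K), and the associated norm satisfies N(γ(x)) = φ(q(x)). -/

import Mathlib

/-- The polar form of a quadratic map. -/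
def polarForm {K V : Type*} [Field K] [AddCommGroup V] (q : V → K) (x y : V) : K :=
  q (x + y) - q x - q y

/-- The Hua map `h_a (x) = f(a, σ x) • a - q a • σ x` of the Moufang set of quadratic
form type, where `σ x = f(ε, x) • ε - x`. -/
def huaMap {K V : Type*} [Field K] [AddCommGroup V] [Module K V] (q : V → K) (ε : V)
    (a x : V) : V :=
  polarForm q a (polarForm q ε x • ε - x) • a - q a • (polarForm q ε x • ε - x)

/-- Herstein-style lemma: if `ad c` squares to zero as an operator on a division ring of
characteristic different from `2`, then `c` is central. -/
lemma aux_herstein {D : Type*} [DivisionRing D] (h2 : (2:D) ≠ 0) (c : D)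
    (h : ∀ d : D, c * (c * d) - 2 * (c * d * c) + d * c * c = 0) :
    ∀ d : D, c * d = d * c := by
  set f : D → D := fun d => c * d - d * c with hf
  have hδ : ∀ d : D, c * f d - f d * c = 0 := by
    intro d
    have heq : c * f d - f d * c = c * (c * d) - 2 * (c * d * c) + d * c * c := by
      simp only [hf]; noncomm_ring
    rw [heq, h d]
  have key2 : ∀ d e : D, 2 * (f d * f e) = 0 := by
    intro d e
    have key : 2 * (f d * f e) =
        (c * f (d*e) - f (d*e) * c) - (c * f d - f d * c) * e - d * (c * f e - f e * c) := by
      simp only [hf]; noncomm_ring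
    rw [key, hδ, hδ, hδ]
    noncomm_ring
  intro d
  have h0 : f d * f d = 0 := by
    have := key2 d d
    exact mul_left_cancel₀ h2 (by rw [this, mul_zero])
  have := mul_self_eq_zero.mp h0
  simp only [hf] at this
  exact sub_eq_zero.mp this

/-- The characteristic-two computation used in the main theorem. -/
lemma aux_char2 {D : Type*} [DivisionRing D] (h2 : (2:D) = 0) (u α ν β p : D)
    (hcα : ∀ d : D, α * d = d * α) (hcβ : ∀ d : D, β * d = d * β)
    (hcp : ∀ d : D, p * d = d * p)
    (hpα : p * α = 1)
    (r2 : u * u = α * u - α * ν)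
    (r3 : α*u*α - α*ν*α + (ν*(u*u) + β*p*β) = u*u*u) :
    β = α * ν := by
  have hc4 : ν*(α*ν) = α*(ν*ν) := by rw [← mul_assoc, ← hcα, mul_assoc]
  have hc3 : ν*(α*u) = α*(ν*u) := by rw [← mul_assoc, ← hcα, mul_assoc]
  have h3 : u*u*u = α*(α*u) - α*(α*ν) - α*(ν*u) := by
    rw [r2, sub_mul, mul_assoc, mul_assoc, r2, mul_sub]
  have h5 : ν*(u*u) = α*(ν*u) - α*(ν*ν) := by rw [r2, mul_sub, hc3, hc4]
  rw [h3, h5] at r3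
  have c1 : α*u*α = α*(α*u) := by rw [mul_assoc, ← hcα]
  have c2 : α*ν*α = α*(α*ν) := by rw [mul_assoc, ← hcα]
  have c5 : β*p*β = β*(β*p) := by rw [mul_assoc, hcp]
  rw [c1, c2, c5] at r3
  have hzz : α*(ν*u) + α*(ν*u) = 0 := by rw [← two_mul, h2, zero_mul]
  have key : β*(β*p) = α*(ν*ν) := by
    calc β*(β*p)
        = (α*(α*u) - α*(α*ν) + (α*(ν*u) - α*(ν*ν) + β*(β*p))) - (α*(α*u) - α*(α*ν))
            + α*(ν*ν) - α*(ν*u) := by abel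
      _ = (α*(α*u) - α*(α*ν) - α*(ν*u)) - (α*(α*u) - α*(α*ν)) + α*(ν*ν) - α*(ν*u) := by
            rw [r3]
      _ = α*(ν*ν) - (α*(ν*u) + α*(ν*u)) := by abel
      _ = α*(ν*ν) := by rw [hzz, sub_zero]
  have key2 : β*β = α*(α*(ν*ν)) := by
    calc β*β = β*(β*(p*α)) := by rw [hpα, mul_one]
      _ = β*(β*p)*α := by rw [mul_assoc, mul_assoc]
      _ = α*(ν*ν)*α := by rw [key]
      _ = α*(α*(ν*ν)) := by rw [mul_assoc, ← hcα]
  have hsq : (β - α*ν)*(β - α*ν) = 0 := by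
    calc (β - α*ν)*(β - α*ν)
        = β*β + (α*ν)*(α*ν) - β*(α*ν) - (α*ν)*β := by noncomm_ring
      _ = β*β + (α*ν)*(α*ν) - β*(α*ν) - β*(α*ν) := by rw [← hcβ (α*ν)]
      _ = β*β + (α*ν)*(α*ν) - (β*(α*ν) + β*(α*ν)) := by abel
      _ = β*β + (α*ν)*(α*ν) := by
            rw [show β*(α*ν) + β*(α*ν) = 0 from by rw [← two_mul, h2, zero_mul], sub_zero]
      _ = α*(α*(ν*ν)) + α*(α*(ν*ν)) := by
            rw [key2, show (α*ν)*(α*ν) = α*(α*(ν*ν)) from by rw [mul_assoc, hc4]]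
      _ = 0 := by rw [← two_mul, h2, zero_mul]
  exact sub_eq_zero.mp (mul_self_eq_zero.mp hsq)

/-- If `γ` is a Jordan isomorphism from a Moufang set of quadratic form type (with
basepoint `ε`) to the Moufang set of a division ring, then with `φ s := γ (s • ε)` every
`x` satisfies `γ x ^ 2 - γ x * φ (T x) + φ (q x) = 0` where `T x = f (ε, x)`; so `D` is
quadratic over the subfield `φ(K)` with norm `N (γ x) = φ (q x)`. -/
theorem jordan_iso_quadratic_linear_quadratic {K V D : Type*} [Field K] [AddCommGroup V]
    [Module K V] [DivisionRing D] (q : V → K)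
    (hqsmul : ∀ (s : K) (x : V), q (s • x) = s ^ 2 * q x)
    (hpaddl : ∀ x x' y : V, polarForm q (x + x') y = polarForm q x y + polarForm q x' y)
    (hpsmull : ∀ (s : K) (x y : V), polarForm q (s • x) y = s * polarForm q x y)
    (hpaddr : ∀ x y y' : V, polarForm q x (y + y') = polarForm q x y + polarForm q x y')
    (hpsmulr : ∀ (s : K) (x y : V), polarForm q x (s • y) = s * polarForm q x y)
    (haniso : ∀ x : V, q x = 0 ↔ x = 0)
    (ε : V) (hε : q ε = 1)
    (γ : V → D) (hbij : Function.Bijective γ)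
    (hadd : ∀ x y : V, γ (x + y) = γ x + γ y)
    (hγε : γ ε = 1)
    (hhua : ∀ a : V, a ≠ 0 → ∀ x : V, γ (huaMap q ε a x) = γ a * γ x * γ a) :
    ∀ x : V, γ x ^ 2 - γ x * γ (polarForm q ε x • ε) + γ (q x • ε) = 0 := by
  -- basic facts
  have hq0 : q 0 = 0 := by simpa using hqsmul 0 0
  have hγ0 : γ 0 = 0 := by
    have h := hadd 0 0
    rw [add_zero] at h
    exact (left_eq_add.mp h)
  have hγneg : ∀ y : V, γ (-y) = - γ y := by
    intro y
    have h : γ y + γ (-y) = 0 := by rw [← hadd, add_neg_cancel, hγ0]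
    exact (neg_eq_of_add_eq_zero_right h).symm
  have hγsub : ∀ y z : V, γ (y - z) = γ y - γ z := by
    intro y z
    rw [sub_eq_add_neg, hadd, hγneg, sub_eq_add_neg]
  have hεne : ε ≠ 0 := by
    intro h
    rw [h, hq0] at hε
    exact one_ne_zero hε.symm
  have hγne : ∀ y : V, y ≠ 0 → γ y ≠ 0 := fun y hy h => hy (hbij.injective (h.trans hγ0.symm))
  have hp0r : ∀ y : V, polarForm q y 0 = 0 := by
    intro y; simp [polarForm, hq0]
  have hsymm : ∀ y z : V, polarForm q y z = polarForm q z y := by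
    intro y z
    unfold polarForm
    rw [add_comm]
    ring
  have hpsubr : ∀ a y z : V, polarForm q a (y - z) = polarForm q a y - polarForm q a z := by
    intro a y z
    have h1 : polarForm q a (-z) = - polarForm q a z := by
      have h := hpsmulr (-1) a z
      rw [neg_one_smul] at h
      rw [h]; ring
    rw [sub_eq_add_neg, hpaddr, h1, sub_eq_add_neg]
  have hfεε : polarForm q ε ε = 2 := by
    have h1 : q (ε + ε) = 4 := by
      have h := hqsmul 2 ε
      rw [two_smul] at h
      rw [h, hε]; norm_num
    unfold polarForm
    rw [h1, hε]; norm_num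
  have hσline : ∀ s : K, polarForm q ε (s • ε) • ε - s • ε = s • ε := by
    intro s
    rw [hpsmulr, hfεε, ← sub_smul, show s * 2 - s = s from by ring]
  have hφinj : ∀ s t : K, γ (s • ε) = γ (t • ε) → s = t := by
    intro s t h
    have h1 : (s - t) • ε = 0 := by
      apply hbij.injective
      rw [sub_smul, hγsub, h, sub_self, hγ0]
    by_contra hne
    have h2 : (s - t)⁻¹ • ((s - t) • ε) = 0 := by rw [h1, smul_zero]
    rw [smul_smul, inv_mul_cancel₀ (sub_ne_zero.mpr hne), one_smul] at h2
    exact hεne h2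
  have hsmulne : ∀ (s : K) (y : V), s ≠ 0 → y ≠ 0 → s • y ≠ 0 := by
    intro s y hs hy h
    have h1 := hqsmul s y
    rw [h, hq0] at h1
    have hqy : q y ≠ 0 := fun hh => hy ((haniso y).mp hh)
    exact (mul_ne_zero (pow_ne_zero _ hs) hqy) h1.symm
  -- key Hua instances
  have hA : ∀ a : V, a ≠ 0 → ∀ s : K,
      γ ((s * polarForm q ε a) • a) - γ ((s * q a) • ε) = γ a * γ (s • ε) * γ a := by
    intro a ha s
    have h1 := hhua a ha (s • ε)
    have h2 : huaMap q ε a (s • ε) = (s * polarForm q ε a) • a - (s * q a) • ε := by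
      unfold huaMap
      rw [hσline s, hpsmulr, hsymm a ε, smul_smul, mul_comm (q a) s]
    rw [h2, hγsub] at h1
    exact h1
  have hB : ∀ (s : K) (y : V), γ ((s * s) • y) = γ (s • ε) * γ y * γ (s • ε) := by
    intro s y
    by_cases hs : s = 0
    · rw [hs, zero_mul, zero_smul, zero_smul, hγ0]
      simp
    · have h1 := hhua (s • ε) (hsmulne s ε hs hεne) y
      have h2 : huaMap q ε (s • ε) y = (s * s) • y := by
        unfold huaMap
        rw [hpsmull, hpsubr, hpsmulr, hfεε, hqsmul, hε]
        rw [smul_smul, smul_sub, smul_smul]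
        rw [show s * (polarForm q ε y * 2 - polarForm q ε y) * s
              = s ^ 2 * 1 * polarForm q ε y from by ring,
            show (s ^ 2 * 1 : K) = s * s from by ring]
        abel
      rw [h2] at h1
      exact h1
  have hφsq : ∀ s t : K, γ ((s * s * t) • ε) = γ (s • ε) * γ (t • ε) * γ (s • ε) := by
    intro s t
    have h := hB s (t • ε)
    rw [smul_smul] at h
    exact h
  have hAC : ∀ (s : K) (y : V),
      γ ((2 * s) • y) = γ (s • ε) * γ y + γ y * γ (s • ε) := by
    intro s y
    have h1 := hB (s + 1) y
    have e : ((s + 1) * (s + 1)) • y = (s * s) • y + ((2 * s) • y + y) := by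
      rw [show (s + 1) * (s + 1) = s * s + (2 * s + 1) from by ring, add_smul, add_smul,
        one_smul]
    rw [e, hadd, hadd, hB s y] at h1
    have e2 : γ ((s + 1) • ε) = γ (s • ε) + 1 := by rw [add_smul, one_smul, hadd, hγε]
    rw [e2] at h1
    have e3 : (γ (s • ε) + 1) * γ y * (γ (s • ε) + 1)
        = γ (s • ε) * γ y * γ (s • ε) + ((γ (s • ε) * γ y + γ y * γ (s • ε)) + γ y) := by
      noncomm_ring
    rw [e3] at h1
    exact add_right_cancel (add_left_cancel h1)
  have hchar2K : (2:D) = 0 → (2:K) = 0 := by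
    intro h2
    have ha : γ ((2:K) • ε) = γ ((0:K) • ε) := by
      rw [two_smul, hadd, hγε, zero_smul, hγ0, one_add_one_eq_two]
      exact h2
    exact hφinj 2 0 ha
  -- centrality of the image of K
  have hcent : ∀ (s : K) (d : D), γ (s • ε) * d = d * γ (s • ε) := by
    intro s
    by_cases h2 : (2:D) = 0
    · intro d
      obtain ⟨y, rfl⟩ := hbij.surjective d
      have hK2 : (2:K) = 0 := hchar2K h2
      have h1 := hAC s y
      rw [hK2, zero_mul, zero_smul, hγ0] at h1
      have hne : ∀ c : D, -c = c := fun c =>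
        neg_eq_of_add_eq_zero_left (by rw [← two_mul, h2, zero_mul])
      have n1 : -(γ y * γ (s • ε)) = γ (s • ε) * γ y := neg_eq_of_add_eq_zero_left h1.symm
      exact n1.symm.trans (hne _)
    · apply aux_herstein h2
      intro d
      obtain ⟨y, rfl⟩ := hbij.surjective d
      have h3 : γ ((2 * s) • ε) = 2 * γ (s • ε) := by
        have h := hAC s ε
        rw [hγε, mul_one, one_mul] at h
        rw [h, two_mul]
      have h1 := hAC s ((2 * s) • y)
      rw [smul_smul] at h1
      rw [hB (2 * s) y, h3, hAC s y] at h1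
      have expand : γ (s • ε) * (γ (s • ε) * γ y) - 2 * (γ (s • ε) * γ y * γ (s • ε))
          + γ y * γ (s • ε) * γ (s • ε)
          = (γ (s • ε) * (γ (s • ε) * γ y + γ y * γ (s • ε))
              + (γ (s • ε) * γ y + γ y * γ (s • ε)) * γ (s • ε))
            - 2 * γ (s • ε) * γ y * (2 * γ (s • ε)) := by noncomm_ring
      rw [expand, ← h1, sub_self]
  -- main argument
  intro x
  by_cases hx0 : x = 0
  · subst hx0
    rw [hp0r, hq0, zero_smul, hγ0]
    norm_num
  · have key1 := hA x hx0 1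
    rw [one_mul, one_mul, one_smul, hγε, mul_one] at key1
    by_cases hT : polarForm q ε x = 0
    · rw [hT, zero_smul, hγ0, zero_sub] at key1
      rw [hT, zero_smul, hγ0, mul_zero, pow_two, sub_zero, ← key1]
      exact neg_add_cancel _
    · -- notation: T = polarForm q ε x, α = γ (T • ε), ν = γ ((T⁻¹ * q x) • ε),
      -- β = γ (q x • ε), p = γ (T⁻¹ • ε), u = γ x
      have hpne : γ ((polarForm q ε x)⁻¹ • ε) ≠ 0 :=
        hγne _ (hsmulne _ ε (inv_ne_zero hT) hεne)
      have hq1 := hφsq (polarForm q ε x)⁻¹ (polarForm q ε x)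
      rw [show (polarForm q ε x)⁻¹ * (polarForm q ε x)⁻¹ * polarForm q ε x
            = (polarForm q ε x)⁻¹ from by
          rw [mul_assoc, inv_mul_cancel₀ hT, mul_one]] at hq1
      have hpα : γ ((polarForm q ε x)⁻¹ • ε) * γ (polarForm q ε x • ε) = 1 := by
        have h' : (γ ((polarForm q ε x)⁻¹ • ε) * γ (polarForm q ε x • ε))
            * γ ((polarForm q ε x)⁻¹ • ε) = 1 * γ ((polarForm q ε x)⁻¹ • ε) := by
          rw [one_mul]; exact hq1.symm
        exact mul_right_cancel₀ hpne h'
      have hαp : γ (polarForm q ε x • ε) * γ ((polarForm q ε x)⁻¹ • ε) = 1 := by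
        have h' : γ ((polarForm q ε x)⁻¹ • ε)
            * (γ (polarForm q ε x • ε) * γ ((polarForm q ε x)⁻¹ • ε))
            = γ ((polarForm q ε x)⁻¹ • ε) * 1 := by
          rw [mul_one, ← mul_assoc]; exact hq1.symm
        exact mul_left_cancel₀ hpne h'
      have h1 : ∀ s : K, γ ((s * polarForm q ε x) • x)
          = γ (s • ε) * (γ x * γ x) + γ ((s * q x) • ε) := by
        intro s
        have h := hA x hx0 s
        rw [sub_eq_iff_eq_add] at h
        rw [h, ← hcent, mul_assoc]
      have h1T := h1 (polarForm q ε x)⁻¹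
      rw [inv_mul_cancel₀ hT, one_smul] at h1T
      have e1 : γ ((polarForm q ε x)⁻¹ • ε) * (γ x * γ x)
          = γ x - γ (((polarForm q ε x)⁻¹ * q x) • ε) := eq_sub_of_add_eq h1T.symm
      have hu2 : γ x * γ x = γ (polarForm q ε x • ε) * γ x
          - γ (polarForm q ε x • ε) * γ (((polarForm q ε x)⁻¹ * q x) • ε) := by
        calc γ x * γ x = 1 * (γ x * γ x) := by rw [one_mul]
          _ = (γ (polarForm q ε x • ε) * γ ((polarForm q ε x)⁻¹ • ε)) * (γ x * γ x) := by
                rw [hαp]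
          _ = γ (polarForm q ε x • ε) * (γ ((polarForm q ε x)⁻¹ • ε) * (γ x * γ x)) := by
                rw [mul_assoc]
          _ = γ (polarForm q ε x • ε) * (γ x - γ (((polarForm q ε x)⁻¹ * q x) • ε)) := by
                rw [e1]
          _ = _ := by rw [mul_sub]
      have hβν : γ (q x • ε)
          = γ (polarForm q ε x • ε) * γ (((polarForm q ε x)⁻¹ * q x) • ε) := by
        by_cases h2 : (2:D) = 0
        · -- characteristic two
          have hK2 : (2:K) = 0 := hchar2K h2
          have hfxx : polarForm q x x = 2 * q x := by
            have h4 : q (x + x) = 4 * q x := by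
              have h := hqsmul 2 x
              rw [two_smul] at h
              rw [h]; norm_num
            unfold polarForm
            rw [h4]; ring
          have hw : polarForm q x (polarForm q ε x • ε - x)
              = polarForm q ε x * polarForm q ε x := by
            rw [hpsubr, hpsmulr, hsymm x ε, hfxx, hK2]; ring
          have hcompute : huaMap q ε x x
              = (polarForm q ε x * polarForm q ε x) • x
                - (q x * polarForm q ε x) • ε + q x • x := by
            unfold huaMap
            rw [hw, smul_sub, smul_smul]
            abel
          have hC := hhua x hx0 x
          rw [hcompute, hadd, hγsub, hB (polarForm q ε x) x] at hC
          have heQ : γ ((q x * polarForm q ε x) • ε)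
              = γ (polarForm q ε x • ε) * γ (((polarForm q ε x)⁻¹ * q x) • ε)
                * γ (polarForm q ε x • ε) := by
            have h := hφsq (polarForm q ε x) ((polarForm q ε x)⁻¹ * q x)
            rw [show polarForm q ε x * polarForm q ε x * ((polarForm q ε x)⁻¹ * q x)
                  = q x * polarForm q ε x from by
                rw [mul_assoc, ← mul_assoc (polarForm q ε x) (polarForm q ε x)⁻¹ (q x),
                  mul_inv_cancel₀ hT, one_mul, mul_comm]] at h
            exact h
          rw [heQ] at hC
          have e := h1 (q x * (polarForm q ε x)⁻¹)
          rw [show q x * (polarForm q ε x)⁻¹ * polarForm q ε x = q x from by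
              rw [mul_assoc, inv_mul_cancel₀ hT, mul_one]] at e
          rw [mul_comm (q x) (polarForm q ε x)⁻¹] at e
          rw [show (polarForm q ε x)⁻¹ * q x * q x
                = q x * q x * (polarForm q ε x)⁻¹ from by ring] at e
          rw [hφsq (q x) (polarForm q ε x)⁻¹] at e
          rw [e] at hC
          exact aux_char2 h2 (γ x) (γ (polarForm q ε x • ε))
            (γ (((polarForm q ε x)⁻¹ * q x) • ε)) (γ (q x • ε))
            (γ ((polarForm q ε x)⁻¹ • ε))
            (fun d => hcent _ d) (fun d => hcent _ d) (fun d => hcent _ d)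
            hpα hu2 hC
        · -- characteristic not two
          have hmul : ∀ s t : K, γ ((s * t) • ε) = γ (s • ε) * γ (t • ε) := by
            intro s t
            have h1' := hAC s (t • ε)
            rw [smul_smul] at h1'
            rw [hcent t (γ (s • ε))] at h1'
            rw [show (2 * s) * t = s * t + s * t from by ring, add_smul, hadd] at h1'
            rw [← two_mul, ← two_mul] at h1'
            exact mul_left_cancel₀ h2 h1'
          have e : q x = polarForm q ε x * ((polarForm q ε x)⁻¹ * q x) := by
            rw [← mul_assoc, mul_inv_cancel₀ hT, one_mul]
          calc γ (q x • ε)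
              = γ ((polarForm q ε x * ((polarForm q ε x)⁻¹ * q x)) • ε) := by rw [← e]
            _ = _ := hmul _ _
      rw [pow_two, ← hcent, hu2, hβν]
      abel
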